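/- Let F = F_{−1,1}. Then the sets P = {(−3, −1), (3, −3), (5, 1), (3, 5)} and X = {(−1, 1), (−1, −1), (1, −1), (1, 1)} are periodic orbits of F of minimal period 4, and the set S = {(−1/3, −1/3), (−1/3, 1/3), (−1, 1/3)} is a periodic orbit of F of minimal period 3. -/
import Mathlib


/-- The piecewise linear map `F_{a,b}(x,y) = (|x| - y + a, x - |y| + b)`. -/
noncomputable def F (a b : ℝ) : ℝ × ℝ → ℝ × ℝ :=
  fun p => (|p.1| - p.2 + a, p.1 - |p.2| + b)

/-- `S` is a periodic orbit of `f` of minimal period `n`: it is the (finite) orbit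
`{p, f p, …, f^[n-1] p}` of some periodic point `p` of minimal period `n`. -/
def IsPeriodicOrbit (f : ℝ × ℝ → ℝ × ℝ) (n : ℕ) (S : Set (ℝ × ℝ)) : Prop :=
  ∃ p : ℝ × ℝ, Function.minimalPeriod f p = n ∧ 0 < n ∧
    S = (fun k : ℕ => f^[k] p) '' Set.Iio n

/-- For `F = F_{-1,1}`: `P` and `X` are 4-periodic orbits and `S` is a 3-periodic
orbit. -/
lemma minper4 (f : ℝ×ℝ→ℝ×ℝ) (p : ℝ×ℝ) (h4 : f^[4] p = p) (h1 : f p ≠ p)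
    (h2 : f^[2] p ≠ p) : Function.minimalPeriod f p = 4 := by
  have hp : Function.IsPeriodicPt f 4 p := h4
  have hd := hp.minimalPeriod_dvd
  have hpos := hp.minimalPeriod_pos (by norm_num)
  have hit := Function.iterate_minimalPeriod (f := f) (x := p)
  have hle := Nat.le_of_dvd (by norm_num) hd
  interval_cases h : Function.minimalPeriod f p
  · exact absurd (by simpa using hit) h1
  · exact absurd (by simpa using hit) h2
  · norm_num at hd
  · rfl

lemma minper3 (f : ℝ×ℝ→ℝ×ℝ) (p : ℝ×ℝ) (h3 : f^[3] p = p) (h1 : f p ≠ p) :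
    Function.minimalPeriod f p = 3 := by
  have hp : Function.IsPeriodicPt f 3 p := h3
  have hd := hp.minimalPeriod_dvd
  have hpos := hp.minimalPeriod_pos (by norm_num)
  have hit := Function.iterate_minimalPeriod (f := f) (x := p)
  have hle := Nat.le_of_dvd (by norm_num) hd
  interval_cases h : Function.minimalPeriod f p
  · exact absurd (by simpa using hit) h1
  · norm_num at hd
  · rfl

lemma iio4 : Set.Iio (4:ℕ) = {0,1,2,3} := by
  ext k
  simp only [Set.mem_Iio, Set.mem_insert_iff, Set.mem_singleton_iff]
  omega

lemma iio3 : Set.Iio (3:ℕ) = {0,1,2} := by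
  ext k
  simp only [Set.mem_Iio, Set.mem_insert_iff, Set.mem_singleton_iff]
  omega

theorem case_b_eq_one :
    IsPeriodicOrbit (F (-1) 1) 4 {(-3, -1), (3, -3), (5, 1), (3, 5)} ∧
    IsPeriodicOrbit (F (-1) 1) 4 {(-1, 1), (-1, -1), (1, -1), (1, 1)} ∧
    IsPeriodicOrbit (F (-1) 1) 3 {(-1/3, -1/3), (-1/3, 1/3), (-1, 1/3)} := by
  have e1 : F (-1) 1 (-3,-1) = (3,-3) := by
    norm_num [F, abs_of_neg, abs_of_nonneg, Prod.ext_iff]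
  have e2 : F (-1) 1 (3,-3) = (5,1) := by
    norm_num [F, abs_of_neg, abs_of_nonneg, Prod.ext_iff]
  have e3 : F (-1) 1 (5,1) = (3,5) := by
    norm_num [F, abs_of_neg, abs_of_nonneg, Prod.ext_iff]
  have e4 : F (-1) 1 (3,5) = (-3,-1) := by
    norm_num [F, abs_of_neg, abs_of_nonneg, Prod.ext_iff]
  have f1 : F (-1) 1 (-1,1) = (-1,-1) := by
    norm_num [F, abs_of_neg, abs_of_nonneg, Prod.ext_iff]
  have f2 : F (-1) 1 (-1,-1) = (1,-1) := by
    norm_num [F, abs_of_neg, abs_of_nonneg, Prod.ext_iff]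
  have f3 : F (-1) 1 (1,-1) = (1,1) := by
    norm_num [F, abs_of_neg, abs_of_nonneg, Prod.ext_iff]
  have f4 : F (-1) 1 (1,1) = (-1,1) := by
    norm_num [F, abs_of_neg, abs_of_nonneg, Prod.ext_iff]
  have g1 : F (-1) 1 (-1/3,-1/3) = (-1/3,1/3) := by
    norm_num [F, abs_of_neg, abs_of_nonneg, Prod.ext_iff]
  have g2 : F (-1) 1 (-1/3,1/3) = (-1,1/3) := by
    norm_num [F, abs_of_neg, abs_of_nonneg, Prod.ext_iff]
  have g3 : F (-1) 1 (-1,1/3) = (-1/3,-1/3) := by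
    norm_num [F, abs_of_neg, abs_of_nonneg, Prod.ext_iff]
  refine ⟨⟨(-3,-1), ?_, by norm_num, ?_⟩, ⟨(-1,1), ?_, by norm_num, ?_⟩,
    ⟨(-1/3,-1/3), ?_, by norm_num, ?_⟩⟩
  · apply minper4
    · simp only [Function.iterate_succ_apply, Function.iterate_zero_apply, e1, e2, e3, e4]
    · rw [e1]; norm_num [Prod.ext_iff]
    · rw [show (F (-1) 1)^[2] (-3,-1) = (5,1) by
        simp only [Function.iterate_succ_apply, Function.iterate_zero_apply, e1, e2]]
      norm_num [Prod.ext_iff]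
  · rw [iio4]
    simp only [Set.image_insert_eq, Set.image_singleton,
      Function.iterate_succ_apply, Function.iterate_zero_apply, e1, e2, e3]
  · apply minper4
    · simp only [Function.iterate_succ_apply, Function.iterate_zero_apply, f1, f2, f3, f4]
    · rw [f1]; norm_num [Prod.ext_iff]
    · rw [show (F (-1) 1)^[2] (-1,1) = (1,-1) by
        simp only [Function.iterate_succ_apply, Function.iterate_zero_apply, f1, f2]]
      norm_num [Prod.ext_iff]
  · rw [iio4]
    simp only [Set.image_insert_eq, Set.image_singleton,
      Function.iterate_succ_apply, Function.iterate_zero_apply, f1, f2, f3]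
  · apply minper3
    · simp only [Function.iterate_succ_apply, Function.iterate_zero_apply, g1, g2, g3]
    · rw [g1]; norm_num [Prod.ext_iff]
  · rw [iio3]
    simp only [Set.image_insert_eq, Set.image_singleton,
      Function.iterate_succ_apply, Function.iterate_zero_apply, g1, g2]
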